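/- Let C be a Boolean circuit with input variables x₁, …, x_n and gates g₁, …, g_m (g₁ the output gate), let v be a truth assignment to the inputs, and let TA_{C,v} be the associated threshold automaton. Then the location ℓ_F is coverable in TA_{C,v} (i.e., there exist an initial configuration σ₀ and a configuration σ with σ₀ →* σ and σ.κ(ℓ_F) > 0) if and only if the circuit C evaluates to 1 under the assignment v. -/

import Mathlib

/-!
Threshold automata (Konnov, Veith, Widder), following
"Complexity of Verification and Synthesis of Threshold Automata".
-/

/-- A threshold guard `x ⋈ a₀ + a₁·p₁ + … + a_{|Π|}·p_{|Π|}` over shared variables `V` and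
parameters `P`.  `isRise = true` means a *rise* guard `x ≥ …`, and `isRise = false` means a
*fall* guard `x < …`. -/
structure TGuard (V P : Type) where
  var : V
  isRise : Bool
  a0 : ℚ
  coef : P → ℚ

/-- A configuration `σ = (κ, g, p)`: numbers of processes in each location, values of the
shared variables, and values of the parameters. -/
structure Config (L V P : Type) where
  κ : L → ℕ
  g : V → ℕ
  p : P → ℕ

/-- A rule of a threshold automaton: source and target locations, a guard that is a
(finite) conjunction of threshold guards, and an update `V → {0,1}`. -/
structure TRule (L V P : Type) where
  src : L
  dst : L
  guard : List (TGuard V P)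
  upd : V → ℕ
  upd_le_one : ∀ v, upd v ≤ 1

/-- A threshold automaton `(L, I, Γ, R)` together with its environment `(Π, RC, N)`.
`L`, `V`, `P` are the types of locations, shared variables and parameters, and `R` is the
index type of rules. -/
structure TA (L V P R : Type) where
  initial : Set L
  initial_nonempty : initial.Nonempty
  rc : Set (P → ℕ)
  N : (P → ℕ) → ℕ
  rule : R → TRule L V P

variable {L V P R : Type}

/-- Satisfaction of a threshold guard by values `g` of the shared variables and `p` of the
parameters. -/
def TGuard.holds [Fintype P] (φ : TGuard V P) (g : V → ℕ) (p : P → ℕ) : Prop :=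
  if φ.isRise then φ.a0 + ∑ i : P, φ.coef i * (p i : ℚ) ≤ (g φ.var : ℚ)
  else (g φ.var : ℚ) < φ.a0 + ∑ i : P, φ.coef i * (p i : ℚ)

/-- A configuration enables a rule. -/
def TRule.enabledAt [Fintype P] (r : TRule L V P) (σ : Config L V P) : Prop :=
  0 < σ.κ r.src ∧ ∀ φ ∈ r.guard, φ.holds σ.g σ.p

/-- The result of firing a rule at a configuration. -/
def TRule.fire [DecidableEq L] (r : TRule L V P) (σ : Config L V P) : Config L V P where
  κ := fun ℓ => σ.κ ℓ + (if ℓ = r.dst then 1 else 0) - (if ℓ = r.src then 1 else 0)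
  g := fun v => σ.g v + r.upd v
  p := σ.p

namespace TA

variable [Fintype P] [DecidableEq L]

/-- `σ` is a configuration of `ta`: the parameters satisfy the resilience condition and the
total number of processes is `N(p)`. -/
def validConfig [Fintype L] (ta : TA L V P R) (σ : Config L V P) : Prop :=
  σ.p ∈ ta.rc ∧ ∑ ℓ : L, σ.κ ℓ = ta.N σ.p

/-- Initial configurations. -/
def isInitial [Fintype L] (ta : TA L V P R) (σ : Config L V P) : Prop :=
  ta.validConfig σ ∧ (∀ ℓ, ℓ ∉ ta.initial → σ.κ ℓ = 0) ∧ ∀ v, σ.g v = 0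

/-- A schedule (finite sequence of rules) is applicable to a configuration. -/
def applicable (ta : TA L V P R) : Config L V P → List R → Prop
  | _, [] => True
  | σ, r :: τ => (ta.rule r).enabledAt σ ∧ ta.applicable ((ta.rule r).fire σ) τ

/-- The configuration `τ(σ)` resulting from applying a schedule. -/
def apply (ta : TA L V P R) : Config L V P → List R → Config L V P
  | σ, [] => σ
  | σ, r :: τ => ta.apply ((ta.rule r).fire σ) τ

/-- The configurations visited by the path from `σ` along `τ` (including both endpoints). -/
def visited (ta : TA L V P R) : Config L V P → List R → List (Config L V P)
  | σ, [] => [σ]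
  | σ, r :: τ => σ :: ta.visited ((ta.rule r).fire σ) τ

/-- Reachability `σ →* σ'`. -/
def reaches (ta : TA L V P R) (σ σ' : Config L V P) : Prop :=
  ∃ τ : List R, ta.applicable σ τ ∧ ta.apply σ τ = σ'

/-- The set of all threshold guards occurring in rules of the automaton. -/
def guards (ta : TA L V P R) : Set (TGuard V P) :=
  {φ | ∃ r : R, φ ∈ (ta.rule r).guard}

/-- The context `ω(σ)`: rise guards of `ta` that are true in `σ` together with fall guards
of `ta` that are false in `σ`. -/
def context (ta : TA L V P R) (σ : Config L V P) : Set (TGuard V P) :=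
  {φ | φ ∈ ta.guards ∧ if φ.isRise then φ.holds σ.g σ.p else ¬ φ.holds σ.g σ.p}

/-- A schedule applicable at `σ` is steady if all configurations visited by the
corresponding path have the same context. -/
def steady (ta : TA L V P R) (σ : Config L V P) (τ : List R) : Prop :=
  ∀ σ' ∈ ta.visited σ τ, ta.context σ' = ta.context σ

end TA

/-! ### The threshold automaton `TA_{C,v}` associated with a Boolean circuit -/

/-- A gate of a Boolean circuit with `n` inputs and `m` gates: a binary `∧`- or `∨`-gate
or a unary `¬`-gate, whose inputs are input variables (`Sum.inl`) or gates (`Sum.inr`). -/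
inductive GateDef (n m : ℕ) where
  | and (s₁ s₂ : Fin n ⊕ Fin m)
  | or (s₁ s₂ : Fin n ⊕ Fin m)
  | not (s : Fin n ⊕ Fin m)
deriving DecidableEq

/-- Evaluation of the circuit `C` under the input assignment `v`: `SigVal C v s b` means
that the signal `s` (input variable or gate) takes the value `b`. -/
inductive SigVal {n m : ℕ} (C : Fin m → GateDef n m) (v : Fin n → Bool) :
    (Fin n ⊕ Fin m) → Bool → Prop
  | input (i : Fin n) : SigVal C v (Sum.inl i) (v i)
  | gand (j : Fin m) (s₁ s₂ : Fin n ⊕ Fin m) (b₁ b₂ : Bool) (h : C j = GateDef.and s₁ s₂)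
      (h₁ : SigVal C v s₁ b₁) (h₂ : SigVal C v s₂ b₂) : SigVal C v (Sum.inr j) (b₁ && b₂)
  | gor (j : Fin m) (s₁ s₂ : Fin n ⊕ Fin m) (b₁ b₂ : Bool) (h : C j = GateDef.or s₁ s₂)
      (h₁ : SigVal C v s₁ b₁) (h₂ : SigVal C v s₂ b₂) : SigVal C v (Sum.inr j) (b₁ || b₂)
  | gnot (j : Fin m) (s : Fin n ⊕ Fin m) (b : Bool) (h : C j = GateDef.not s)
      (h₁ : SigVal C v s b) : SigVal C v (Sum.inr j) (!b)

/-- Locations: `ℓ₀, …, ℓ_n`, the gate locations `ℓ_{g_j}` and `ℓ'_{g_j}`, and `ℓ_F`. -/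
abbrev CLoc (n m : ℕ) := Fin (n + 1) ⊕ (Fin m ⊕ Fin m) ⊕ Unit

def cInput {n m : ℕ} (i : Fin (n + 1)) : CLoc n m := Sum.inl i
def cGate {n m : ℕ} (j : Fin m) : CLoc n m := Sum.inr (Sum.inl (Sum.inl j))
def cGate' {n m : ℕ} (j : Fin m) : CLoc n m := Sum.inr (Sum.inl (Sum.inr j))
def cFin {n m : ℕ} : CLoc n m := Sum.inr (Sum.inr ())

/-- Shared variables: `x_i^b` and `g_j^b`. -/
abbrev CVar (n m : ℕ) := (Fin n × Bool) ⊕ (Fin m × Bool)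

/-- The shared variable `s^b` associated with signal `s` and bit `b`. -/
def sigVar {n m : ℕ} (s : Fin n ⊕ Fin m) (b : Bool) : CVar n m :=
  match s with
  | Sum.inl i => Sum.inl (i, b)
  | Sum.inr j => Sum.inr (j, b)

/-- Rules: the input chain `ℓ_{i-1} → ℓ_i`, the gate rules `ℓ_{g_j} → ℓ'_{g_j}` (indexed
by the gate and a pair of bits) and the final rule `ℓ'_{g_1} → ℓ_F`. -/
abbrev CRule (n m : ℕ) := Fin n ⊕ (Fin m × Bool × Bool) ⊕ Unit

/-- A guard with constant threshold (all parameter coefficients `0`). -/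
def constGuard {V P : Type} (isRise : Bool) (x : V) (a : ℚ) : TGuard V P :=
  ⟨x, isRise, a, fun _ => 0⟩

/-- The update incrementing exactly the shared variable `x`. -/
def unitUpd {V : Type} [DecidableEq V] (x : V) : V → ℕ := fun v => if v = x then 1 else 0

theorem unitUpd_le_one {V : Type} [DecidableEq V] (x v : V) : unitUpd x v ≤ 1 := by
  unfold unitUpd; split <;> omega

/-- The rules of `TA_{C,v}` (here `hm : 0 < m` and the output gate is gate `0`). -/
def circRule {n m : ℕ} (hm : 0 < m) (C : Fin m → GateDef n m) (v : Fin n → Bool) :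
    CRule n m → TRule (CLoc n m) (CVar n m) Unit
  | Sum.inl i =>
      ⟨cInput i.castSucc, cInput i.succ, [], unitUpd (Sum.inl (i, v i)),
        fun x => unitUpd_le_one _ x⟩
  | Sum.inr (Sum.inl (j, b, b')) =>
      match C j with
      | GateDef.and s₁ s₂ =>
          ⟨cGate j, cGate' j,
            [constGuard true (sigVar s₁ b) 1, constGuard true (sigVar s₂ b') 1],
            unitUpd (Sum.inr (j, b && b')), fun x => unitUpd_le_one _ x⟩
      | GateDef.or s₁ s₂ =>
          ⟨cGate j, cGate' j,
            [constGuard true (sigVar s₁ b) 1, constGuard true (sigVar s₂ b') 1],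
            unitUpd (Sum.inr (j, b || b')), fun x => unitUpd_le_one _ x⟩
      | GateDef.not s =>
          ⟨cGate j, cGate' j, [constGuard true (sigVar s b) 1],
            unitUpd (Sum.inr (j, !b)), fun x => unitUpd_le_one _ x⟩
  | Sum.inr (Sum.inr _) =>
      ⟨cGate' ⟨0, hm⟩, cFin, [constGuard true (Sum.inr (⟨0, hm⟩, true)) 1],
        fun _ => 0, fun _ => Nat.zero_le 1⟩

/-- The threshold automaton `TA_{C,v}`: one parameter `k`, trivial resilience condition,
`N(k) = k`; the initial locations are `ℓ₀` and the gate locations `ℓ_{g_j}`. -/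
def circTA {n m : ℕ} (hm : 0 < m) (C : Fin m → GateDef n m) (v : Fin n → Bool) :
    TA (CLoc n m) (CVar n m) Unit (CRule n m) where
  initial := {ℓ | ℓ = cInput 0 ∨ ∃ j : Fin m, ℓ = cGate j}
  initial_nonempty := ⟨cInput 0, Or.inl rfl⟩
  rc := Set.univ
  N := fun p => p ()
  rule := circRule hm C v

/-! ### Auxiliary lemmas -/

section Aux

namespace TA

variable {L V P R : Type} [Fintype P] [DecidableEq L]

theorem applicable_append (ta : TA L V P R) (σ : Config L V P) (τ₁ τ₂ : List R) :
    ta.applicable σ (τ₁ ++ τ₂) ↔ ta.applicable σ τ₁ ∧ ta.applicable (ta.apply σ τ₁) τ₂ := by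
  induction τ₁ generalizing σ with
  | nil => simp [applicable, apply]
  | cons r τ ih => simp [applicable, apply, ih, and_assoc]

theorem apply_append (ta : TA L V P R) (σ : Config L V P) (τ₁ τ₂ : List R) :
    ta.apply σ (τ₁ ++ τ₂) = ta.apply (ta.apply σ τ₁) τ₂ := by
  induction τ₁ generalizing σ with
  | nil => simp [apply]
  | cons r τ ih => simp [apply, ih]

theorem g_apply_mono (ta : TA L V P R) (σ : Config L V P) (τ : List R) (x : V) :
    σ.g x ≤ (ta.apply σ τ).g x := by
  induction τ generalizing σ with
  | nil => simp [apply]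
  | cons r τ ih =>
      calc σ.g x ≤ ((ta.rule r).fire σ).g x := Nat.le_add_right _ _
        _ ≤ _ := ih _

end TA

variable {n m : ℕ}

theorem constGuard_holds (x : CVar n m) (g : CVar n m → ℕ) (p : Unit → ℕ) :
    (constGuard true x 1 : TGuard (CVar n m) Unit).holds g p ↔ 1 ≤ g x := by
  simp [TGuard.holds, constGuard]

/-- Correctness of a shared-variable value: the bit stored matches circuit evaluation. -/
def VarOK (C : Fin m → GateDef n m) (v : Fin n → Bool) : CVar n m → Prop
  | Sum.inl (i, b) => SigVal C v (Sum.inl i) b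
  | Sum.inr (j, b) => SigVal C v (Sum.inr j) b

theorem varOK_sigVar (C : Fin m → GateDef n m) (v : Fin n → Bool) (s : Fin n ⊕ Fin m)
    (b : Bool) : VarOK C v (sigVar s b) ↔ SigVal C v s b := by
  cases s <;> rfl

/-- The invariant preserved by all rules of `TA_{C,v}`. -/
def CInv (hm : 0 < m) (C : Fin m → GateDef n m) (v : Fin n → Bool)
    (σ : Config (CLoc n m) (CVar n m) Unit) : Prop :=
  (∀ x, 1 ≤ σ.g x → VarOK C v x) ∧ (1 ≤ σ.κ cFin → SigVal C v (Sum.inr ⟨0, hm⟩) true)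

theorem cInv_step (hm : 0 < m) (C : Fin m → GateDef n m) (v : Fin n → Bool)
    (σ : Config (CLoc n m) (CVar n m) Unit) (r : CRule n m)
    (hen : (circRule hm C v r).enabledAt σ) (hI : CInv hm C v σ) :
    CInv hm C v ((circRule hm C v r).fire σ) := by
  obtain ⟨hI1, hI2⟩ := hI
  obtain ⟨-, hg⟩ := hen
  rcases r with i | ⟨⟨j, b, b'⟩⟩ | u
  · -- input rule
    constructor
    · intro x hx
      simp only [TRule.fire, circRule] at hx
      by_cases hxe : x = Sum.inl (i, v i)
      · subst hxe
        exact SigVal.input i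
      · rw [unitUpd, if_neg hxe] at hx
        exact hI1 x (by omega)
    · intro hx
      simp only [TRule.fire, circRule, cFin, cInput] at hx ⊢
      simp at hx
      exact hI2 hx
  · -- gate rule
    rcases hC : C j with ⟨s₁, s₂⟩ | ⟨s₁, s₂⟩ | s
    all_goals simp only [circRule, hC] at hg ⊢
    · have h1 : SigVal C v s₁ b := (varOK_sigVar C v s₁ b).1 <| hI1 _ <|
        (constGuard_holds _ _ _).1 (hg _ (by simp))
      have h2 : SigVal C v s₂ b' := (varOK_sigVar C v s₂ b').1 <| hI1 _ <|
        (constGuard_holds _ _ _).1 (hg _ (by simp))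
      constructor
      · intro x hx
        simp only [TRule.fire] at hx
        by_cases hxe : x = Sum.inr (j, b && b')
        · subst hxe
          exact SigVal.gand j s₁ s₂ b b' hC h1 h2
        · rw [unitUpd, if_neg hxe] at hx
          exact hI1 x (by omega)
      · intro hx
        simp only [TRule.fire, cFin, cGate, cGate'] at hx ⊢
        simp at hx
        exact hI2 hx
    · have h1 : SigVal C v s₁ b := (varOK_sigVar C v s₁ b).1 <| hI1 _ <|
        (constGuard_holds _ _ _).1 (hg _ (by simp))
      have h2 : SigVal C v s₂ b' := (varOK_sigVar C v s₂ b').1 <| hI1 _ <|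
        (constGuard_holds _ _ _).1 (hg _ (by simp))
      constructor
      · intro x hx
        simp only [TRule.fire] at hx
        by_cases hxe : x = Sum.inr (j, b || b')
        · subst hxe
          exact SigVal.gor j s₁ s₂ b b' hC h1 h2
        · rw [unitUpd, if_neg hxe] at hx
          exact hI1 x (by omega)
      · intro hx
        simp only [TRule.fire, cFin, cGate, cGate'] at hx ⊢
        simp at hx
        exact hI2 hx
    · have h1 : SigVal C v s b := (varOK_sigVar C v s b).1 <| hI1 _ <|
        (constGuard_holds _ _ _).1 (hg _ (by simp))
      constructor
      · intro x hx
        simp only [TRule.fire] at hx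
        by_cases hxe : x = Sum.inr (j, !b)
        · subst hxe
          exact SigVal.gnot j s b hC h1
        · rw [unitUpd, if_neg hxe] at hx
          exact hI1 x (by omega)
      · intro hx
        simp only [TRule.fire, cFin, cGate, cGate'] at hx ⊢
        simp at hx
        exact hI2 hx
  · -- final rule
    have h1 : SigVal C v (Sum.inr ⟨0, hm⟩) true :=
      hI1 (Sum.inr (⟨0, hm⟩, true)) ((constGuard_holds _ _ _).1 (hg _ (by simp [circRule])))
    constructor
    · intro x hx
      simp only [TRule.fire, circRule] at hx
      exact hI1 x (by omega)
    · intro _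
      exact h1

theorem cInv_apply (hm : 0 < m) (C : Fin m → GateDef n m) (v : Fin n → Bool)
    (σ : Config (CLoc n m) (CVar n m) Unit) (τ : List (CRule n m))
    (happ : (circTA hm C v).applicable σ τ) (hI : CInv hm C v σ) :
    CInv hm C v ((circTA hm C v).apply σ τ) := by
  induction τ generalizing σ with
  | nil => exact hI
  | cons r τ ih =>
      obtain ⟨hen, happ⟩ := happ
      exact ih _ happ (cInv_step hm C v σ r hen hI)

/-- The specification of a schedule establishing `s^b ≥ 1`. -/
def SchedSpec (hm : 0 < m) (C : Fin m → GateDef n m) (v : Fin n → Bool)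
    (s : Fin n ⊕ Fin m) (b : Bool) : Prop :=
  ∃ K : ℕ, ∀ σ : Config (CLoc n m) (CVar n m) Unit,
    (∀ i : Fin n, 1 ≤ σ.g (Sum.inl (i, v i))) →
    (∀ j : Fin m, K ≤ σ.κ (cGate j)) →
    ∃ τ, (circTA hm C v).applicable σ τ ∧
      1 ≤ ((circTA hm C v).apply σ τ).g (sigVar s b) ∧
      (∀ j, σ.κ (cGate j) ≤ ((circTA hm C v).apply σ τ).κ (cGate j) + K) ∧
      (∀ j, σ.κ (cGate' j) ≤ ((circTA hm C v).apply σ τ).κ (cGate' j)) ∧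
      (∀ j, s = Sum.inr j → 1 ≤ ((circTA hm C v).apply σ τ).κ (cGate' j))

theorem gate_sched_binary (hm : 0 < m) (C : Fin m → GateDef n m) (v : Fin n → Bool)
    (j : Fin m) (s₁ s₂ : Fin n ⊕ Fin m) (b₁ b₂ bo : Bool)
    (hrule : circRule hm C v (Sum.inr (Sum.inl (j, b₁, b₂))) =
      ⟨cGate j, cGate' j,
        [constGuard true (sigVar s₁ b₁) 1, constGuard true (sigVar s₂ b₂) 1],
        unitUpd (Sum.inr (j, bo)), fun x => unitUpd_le_one _ x⟩)
    (ih₁ : SchedSpec hm C v s₁ b₁) (ih₂ : SchedSpec hm C v s₂ b₂) :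
    SchedSpec hm C v (Sum.inr j) bo := by
  obtain ⟨K₁, ihK₁⟩ := ih₁
  obtain ⟨K₂, ihK₂⟩ := ih₂
  refine ⟨K₁ + K₂ + 1, fun σ hin hκ => ?_⟩
  obtain ⟨τ₁, happ₁, hg₁, hκ₁, hκ'₁, -⟩ := ihK₁ σ hin (fun j' => le_trans (by omega) (hκ j'))
  set σ₁ := (circTA hm C v).apply σ τ₁ with hσ₁
  obtain ⟨τ₂, happ₂, hg₂, hκ₂, hκ'₂, -⟩ :=
    ihK₂ σ₁ (fun i => le_trans (hin i) (TA.g_apply_mono _ _ _ _))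
      (fun j' => by have := hκ j'; have := hκ₁ j'; omega)
  set σ₂ := (circTA hm C v).apply σ₁ τ₂ with hσ₂
  set r : CRule n m := Sum.inr (Sum.inl (j, b₁, b₂)) with hr
  have hpos : 0 < σ₂.κ (cGate j) := by have := hκ j; have := hκ₁ j; have := hκ₂ j; omega
  have hg₁' : 1 ≤ σ₂.g (sigVar s₁ b₁) := le_trans hg₁ (TA.g_apply_mono _ _ _ _)
  have hen : (circRule hm C v r).enabledAt σ₂ := by
    rw [hrule]
    refine ⟨hpos, ?_⟩
    intro φ hφ
    simp only [List.mem_cons, List.not_mem_nil, or_false] at hφ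
    rcases hφ with rfl | rfl
    · rw [constGuard_holds]; exact hg₁'
    · rw [constGuard_holds]; exact hg₂
  have happly : (circTA hm C v).apply σ (τ₁ ++ (τ₂ ++ [r])) = (circRule hm C v r).fire σ₂ := by
    rw [TA.apply_append, TA.apply_append]; rfl
  refine ⟨τ₁ ++ (τ₂ ++ [r]), ?_, ?_, ?_, ?_, ?_⟩
  · rw [TA.applicable_append, TA.applicable_append]
    exact ⟨happ₁, happ₂, hen, trivial⟩
  · rw [happly, hrule]
    simp [TRule.fire, unitUpd, sigVar]
  · intro j'
    rw [happly, hrule]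
    have hA := hκ₁ j'; have hB := hκ₂ j'
    simp only [TRule.fire] at hA hB ⊢
    delta cGate cGate' at hA hB ⊢
    rw [if_neg (by simp)]
    by_cases hjj : j' = j
    · subst hjj
      rw [if_pos rfl]
      omega
    · rw [if_neg (by simp [hjj])]
      omega
  · intro j'
    rw [happly, hrule]
    have hA := hκ'₁ j'; have hB := hκ'₂ j'
    simp only [TRule.fire] at hA hB ⊢
    delta cGate cGate' at hA hB ⊢
    by_cases hjj : j' = j
    · subst hjj
      rw [if_pos rfl, if_neg (by simp)]
      omega
    · rw [if_neg (by simp [hjj]), if_neg (by simp)]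
      omega
  · rintro j' hj'
    obtain rfl : j = j' := by injection hj'
    rw [happly, hrule]
    simp [TRule.fire, cGate, cGate']

/-- The schedule evaluating the gates, by induction on the derivation of `SigVal`. -/
theorem gate_sched (hm : 0 < m) (C : Fin m → GateDef n m) (v : Fin n → Bool)
    {s : Fin n ⊕ Fin m} {b : Bool} (hs : SigVal C v s b) :
    ∃ K : ℕ, ∀ σ : Config (CLoc n m) (CVar n m) Unit,
      (∀ i : Fin n, 1 ≤ σ.g (Sum.inl (i, v i))) →
      (∀ j : Fin m, K ≤ σ.κ (cGate j)) →
      ∃ τ, (circTA hm C v).applicable σ τ ∧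
        1 ≤ ((circTA hm C v).apply σ τ).g (sigVar s b) ∧
        (∀ j, σ.κ (cGate j) ≤ ((circTA hm C v).apply σ τ).κ (cGate j) + K) ∧
        (∀ j, σ.κ (cGate' j) ≤ ((circTA hm C v).apply σ τ).κ (cGate' j)) ∧
        (∀ j, s = Sum.inr j → 1 ≤ ((circTA hm C v).apply σ τ).κ (cGate' j)) := by
  induction hs with
  | input i =>
      refine ⟨0, fun σ hin _ => ⟨[], trivial, ?_, ?_, ?_, ?_⟩⟩
      · exact hin i
      · intro j; simp [TA.apply]
      · intro j; simp [TA.apply]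
      · intro j hj; exact absurd hj (by simp)
  | gand j s₁ s₂ b₁ b₂ hC h₁ h₂ ih₁ ih₂ =>
      exact gate_sched_binary hm C v j s₁ s₂ b₁ b₂ (b₁ && b₂)
        (by simp only [circRule, hC]) ih₁ ih₂
  | gor j s₁ s₂ b₁ b₂ hC h₁ h₂ ih₁ ih₂ =>
      exact gate_sched_binary hm C v j s₁ s₂ b₁ b₂ (b₁ || b₂)
        (by simp only [circRule, hC]) ih₁ ih₂
  | gnot j s b hC h ih =>
      obtain ⟨K, ihK⟩ := ih
      refine ⟨K + 1, fun σ hin hκ => ?_⟩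
      obtain ⟨τ₁, happ₁, hg₁, hκ₁, hκ'₁, -⟩ := ihK σ hin (fun j' => le_trans (by omega) (hκ j'))
      set σ₁ := (circTA hm C v).apply σ τ₁ with hσ₁
      set r : CRule n m := Sum.inr (Sum.inl (j, b, b)) with hr
      have hrule : circRule hm C v r = ⟨cGate j, cGate' j, [constGuard true (sigVar s b) 1],
          unitUpd (Sum.inr (j, !b)), fun x => unitUpd_le_one _ x⟩ := by
        simp only [hr, circRule, hC]
      have hpos : 0 < σ₁.κ (cGate j) := by have := hκ₁ j; have := hκ j; omega
      have hen : (circRule hm C v r).enabledAt σ₁ := by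
        rw [hrule]
        exact ⟨hpos, by simpa [constGuard_holds] using hg₁⟩
      refine ⟨τ₁ ++ [r], ?_, ?_, ?_, ?_, ?_⟩
      · rw [TA.applicable_append]
        exact ⟨happ₁, hen, trivial⟩
      · rw [TA.apply_append]
        show 1 ≤ ((circRule hm C v r).fire σ₁).g _
        rw [hrule]
        simp [TRule.fire, unitUpd, sigVar]
      · intro j'
        rw [TA.apply_append]
        show σ.κ (cGate j') ≤ ((circRule hm C v r).fire σ₁).κ (cGate j') + (K + 1)
        rw [hrule]
        have hA := hκ₁ j'
        simp only [TRule.fire] at hA ⊢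
        delta cGate cGate' at hA ⊢
        rw [if_neg (by simp)]
        by_cases hjj : j' = j
        · subst hjj
          rw [if_pos rfl]
          omega
        · rw [if_neg (by simp [hjj])]
          omega
      · intro j'
        rw [TA.apply_append]
        show σ.κ (cGate' j') ≤ ((circRule hm C v r).fire σ₁).κ (cGate' j')
        rw [hrule]
        have hA := hκ'₁ j'
        simp only [TRule.fire] at hA ⊢
        delta cGate cGate' at hA ⊢
        by_cases hjj : j' = j
        · subst hjj
          rw [if_pos rfl, if_neg (by simp)]
          omega
        · rw [if_neg (by simp [hjj]), if_neg (by simp)]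
          omega
      · rintro j' hj'
        obtain rfl : j = j' := by injection hj'
        rw [TA.apply_append]
        show 1 ≤ ((circRule hm C v r).fire σ₁).κ (cGate' j)
        rw [hrule]
        simp [TRule.fire, cGate, cGate']

/-- The schedule setting the input variables: one process walks along the input chain. -/
theorem chain_sched (hm : 0 < m) (C : Fin m → GateDef n m) (v : Fin n → Bool) (d : ℕ) :
    ∀ k : ℕ, ∀ _ : k + d = n, ∀ σ : Config (CLoc n m) (CVar n m) Unit,
      1 ≤ σ.κ (cInput ⟨k, by omega⟩) →
      ∃ τ, (circTA hm C v).applicable σ τ ∧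
        (∀ i : Fin n, k ≤ i.1 → 1 ≤ ((circTA hm C v).apply σ τ).g (Sum.inl (i, v i))) ∧
        (∀ j, ((circTA hm C v).apply σ τ).κ (cGate j) = σ.κ (cGate j)) ∧
        (∀ j, ((circTA hm C v).apply σ τ).κ (cGate' j) = σ.κ (cGate' j)) := by
  induction d with
  | zero =>
      intro k hdk σ hκ
      exact ⟨[], trivial, fun i hi => absurd i.isLt (by omega), fun j => rfl, fun j => rfl⟩
  | succ d ih =>
      intro k hdk σ hκ
      have hk : k < n := by omega
      set r : CRule n m := Sum.inl ⟨k, hk⟩ with hr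
      have hen : (circRule hm C v r).enabledAt σ :=
        ⟨hκ, fun φ hφ => absurd hφ List.not_mem_nil⟩
      set σ₁ := (circRule hm C v r).fire σ with hσ₁
      have hκ₁ : 1 ≤ σ₁.κ (cInput ⟨k + 1, by omega⟩) := by
        show 1 ≤ (σ.κ _ + if (cInput ⟨k + 1, by omega⟩ : CLoc n m) =
            cInput (Fin.succ ⟨k, hk⟩) then 1 else 0) -
          if (cInput ⟨k + 1, by omega⟩ : CLoc n m) = cInput (Fin.castSucc ⟨k, hk⟩) then 1 else 0
        have h1 : (cInput ⟨k + 1, by omega⟩ : CLoc n m) = cInput (Fin.succ ⟨k, hk⟩) := rfl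
        rw [if_pos h1, if_neg (by simp [cInput, Fin.ext_iff])]
        omega
      obtain ⟨τ, happ, hg, hκg, hκg'⟩ := ih (k + 1) (by omega) σ₁ hκ₁
      have hstep : (circTA hm C v).apply σ (r :: τ) = (circTA hm C v).apply σ₁ τ := rfl
      refine ⟨r :: τ, ⟨hen, happ⟩, ?_, ?_, ?_⟩
      · intro i hi
        rw [hstep]
        rcases eq_or_lt_of_le hi with heq | hlt
        · have hieq : i = ⟨k, hk⟩ := Fin.ext heq.symm
          subst hieq
          refine le_trans ?_ (TA.g_apply_mono _ σ₁ τ _)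
          show (1 : ℕ) ≤ σ.g (Sum.inl (⟨k, hk⟩, v ⟨k, hk⟩) : CVar n m) +
            unitUpd (Sum.inl (⟨k, hk⟩, v ⟨k, hk⟩) : CVar n m)
              (Sum.inl (⟨k, hk⟩, v ⟨k, hk⟩) : CVar n m)
          rw [unitUpd, if_pos rfl]
          omega
        · exact hg i hlt
      · intro j
        rw [hstep, hκg j]
        show (σ.κ _ + if (cGate j : CLoc n m) = cInput (Fin.succ ⟨k, hk⟩) then 1 else 0) -
          (if (cGate j : CLoc n m) = cInput (Fin.castSucc ⟨k, hk⟩) then 1 else 0) = _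
        rw [if_neg (by simp [cGate, cInput]), if_neg (by simp [cGate, cInput])]
        omega
      · intro j
        rw [hstep, hκg' j]
        show (σ.κ _ + if (cGate' j : CLoc n m) = cInput (Fin.succ ⟨k, hk⟩) then 1 else 0) -
          (if (cGate' j : CLoc n m) = cInput (Fin.castSucc ⟨k, hk⟩) then 1 else 0) = _
        rw [if_neg (by simp [cGate', cInput]), if_neg (by simp [cGate', cInput])]
        omega

end Aux

/-- The location `ℓ_F` is coverable in `TA_{C,v}` iff the circuit `C` evaluates to `1`
under the assignment `v` (where gate `g₁` — gate `0` — is the output gate). -/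
theorem circuit_value_iff_coverable {n m : ℕ} (hm : 0 < m)
    (C : Fin m → GateDef n m) (v : Fin n → Bool) :
    (∃ σ₀ σ : Config (CLoc n m) (CVar n m) Unit,
      (circTA hm C v).isInitial σ₀ ∧ (circTA hm C v).reaches σ₀ σ ∧ 0 < σ.κ cFin) ↔
    SigVal C v (Sum.inr ⟨0, hm⟩) true := by
  constructor
  · -- coverable → evaluates to 1
    rintro ⟨σ₀, σ, hinit, ⟨τ, happ, happly⟩, hκF⟩
    have hI₀ : CInv hm C v σ₀ := by
      constructor
      · intro x hx
        rw [hinit.2.2 x] at hx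
        omega
      · intro hx
        rw [hinit.2.1 cFin (by simp [circTA, cFin, cInput, cGate])] at hx
        omega
    have hI := cInv_apply hm C v σ₀ τ happ hI₀
    rw [happly] at hI
    exact hI.2 hκF
  · -- evaluates to 1 → coverable
    intro hs
    obtain ⟨K, hK⟩ := gate_sched hm C v hs
    set κ₀ : CLoc n m → ℕ := fun ℓ =>
      match ℓ with
      | Sum.inl i => if i = (0 : Fin (n + 1)) then 1 else 0
      | Sum.inr (Sum.inl (Sum.inl _)) => K
      | Sum.inr (Sum.inl (Sum.inr _)) => 0
      | Sum.inr (Sum.inr _) => 0 with hκ₀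
    set σ₀ : Config (CLoc n m) (CVar n m) Unit :=
      ⟨κ₀, fun _ => 0, fun _ => 1 + m * K⟩ with hσ₀
    have hinit : (circTA hm C v).isInitial σ₀ := by
      refine ⟨⟨trivial, ?_⟩, ?_, fun _ => rfl⟩
      · show ∑ ℓ : CLoc n m, κ₀ ℓ = 1 + m * K
        rw [hκ₀]
        simp [Fintype.sum_sum_type, Finset.sum_ite_eq, mul_comm]
      · rintro (i | (j | j) | u) hℓ
        · have hi : i ≠ 0 := fun h => hℓ (Or.inl (by simp [cInput, h]))
          show (if i = (0 : Fin (n + 1)) then 1 else 0) = 0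
          rw [if_neg hi]
        · exact absurd (Or.inr ⟨j, rfl⟩) hℓ
        · rfl
        · rfl
    have hκ0 : 1 ≤ σ₀.κ (cInput ⟨0, by omega⟩) := by
      show 1 ≤ κ₀ (Sum.inl ⟨0, by omega⟩)
      rw [hκ₀]
      simp [show (⟨0, by omega⟩ : Fin (n + 1)) = 0 from rfl]
    obtain ⟨τ₁, happ₁, hin₁, hκg₁, hκg'₁⟩ := chain_sched hm C v n 0 (by omega) σ₀ hκ0
    set σ₁ := (circTA hm C v).apply σ₀ τ₁ with hσ₁
    have hgates : ∀ j : Fin m, K ≤ σ₁.κ (cGate j) := fun j => le_of_eq (hκg₁ j).symm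
    obtain ⟨τ₂, happ₂, hg₂, -, -, hgate'₂⟩ :=
      hK σ₁ (fun i => hin₁ i (Nat.zero_le _)) hgates
    set σ₂ := (circTA hm C v).apply σ₁ τ₂ with hσ₂
    have hκ'₂ : 1 ≤ σ₂.κ (cGate' ⟨0, hm⟩) := hgate'₂ ⟨0, hm⟩ rfl
    set rF : CRule n m := Sum.inr (Sum.inr ()) with hrF
    have henF : (circRule hm C v rF).enabledAt σ₂ := by
      refine ⟨hκ'₂, ?_⟩
      intro φ hφ
      simp only [hrF, circRule, List.mem_cons, List.not_mem_nil, or_false] at hφ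
      rw [hφ, constGuard_holds]
      exact hg₂
    refine ⟨σ₀, (circRule hm C v rF).fire σ₂, hinit, ⟨τ₁ ++ (τ₂ ++ [rF]), ?_, ?_⟩, ?_⟩
    · rw [TA.applicable_append, TA.applicable_append]
      exact ⟨happ₁, happ₂, henF, trivial⟩
    · rw [TA.apply_append, TA.apply_append]
      rfl
    · show 0 < (σ₂.κ cFin + if (cFin : CLoc n m) = cFin then 1 else 0) -
        if (cFin : CLoc n m) = cGate' ⟨0, hm⟩ then 1 else 0
      rw [if_pos rfl, if_neg (by simp [cFin, cGate'])]
      omega
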